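/- (Uniqueness of local solutions, from the proof of Theorem 2.1.) Let Ψ : C([a,b],E) → C([a,b],E) be a locally contracting Volterra operator with constant q < 1. If y₁ is a local solution of y = Ψy on [a,a+γ₁] and y₂ is a local solution on [a,a+γ₂] with γ₁ ≤ γ₂, then y₁(t) = y₂(t) for all t ∈ [a,a+γ₁]. -/

import Mathlib

open Set Filter Topology

noncomputable section

variable {E : Type*} [NormedAddCommGroup E] [NormedSpace ℝ E] [CompleteSpace E]

/-- The partial sup-norm `‖y‖_ξ = sup_{t ∈ [a, a+ξ]} ‖y t‖` on `C([a,b], E)`. -/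
def partNorm (a b ξ : ℝ) (y : C(Set.Icc a b, E)) : ℝ :=
  sSup ((fun t : Set.Icc a b => ‖y t‖) '' {t : Set.Icc a b | (t : ℝ) ≤ a + ξ})

/-- `y₁` and `y₂` agree on `[a, a+ξ]`. -/
def eqUpTo (a b ξ : ℝ) (y₁ y₂ : C(Set.Icc a b, E)) : Prop :=
  ∀ t : Set.Icc a b, (t : ℝ) ≤ a + ξ → y₁ t = y₂ t

/-- A Volterra operator on `C([a,b], E)` (in the sense of Tikhonov). -/
def IsVolterra (a b : ℝ) (Ψ : C(Set.Icc a b, E) → C(Set.Icc a b, E)) : Prop :=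
  ∀ ξ ∈ Set.Ioo (0:ℝ) (b - a), ∀ y₁ y₂ : C(Set.Icc a b, E),
    eqUpTo a b ξ y₁ y₂ → eqUpTo a b ξ (Ψ y₁) (Ψ y₂)

/-- A locally contracting operator with contraction constant `q`. -/
def IsLocallyContracting (a b q : ℝ) (Ψ : C(Set.Icc a b, E) → C(Set.Icc a b, E)) : Prop :=
  ∀ r > (0:ℝ), ∃ δ > (0:ℝ), ∀ y₁ y₂ : C(Set.Icc a b, E),
    partNorm a b (b - a) y₁ ≤ r → partNorm a b (b - a) y₂ ≤ r →
      (partNorm a b δ (Ψ y₁ - Ψ y₂) ≤ q * partNorm a b δ (y₁ - y₂)) ∧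
      (∀ γ ∈ Set.Ioc (0:ℝ) (b - a - δ), eqUpTo a b γ y₁ y₂ →
        partNorm a b (γ + δ) (Ψ y₁ - Ψ y₂) ≤ q * partNorm a b (γ + δ) (y₁ - y₂))

/-- A local solution of `y = Ψ y` on `[a, a+γ]`: a function continuous on `[a, a+γ]`
admitting a continuous extension `y ∈ C([a,b], E)` with `(Ψ y) t = g t` on `[a, a+γ]`. -/
def IsLocalSolution (a b γ : ℝ) (Ψ : C(Set.Icc a b, E) → C(Set.Icc a b, E))
    (g : ℝ → E) : Prop :=
  0 < γ ∧ γ ≤ b - a ∧ ContinuousOn g (Set.Icc a (a + γ)) ∧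
  ∃ y : C(Set.Icc a b, E),
    (∀ t : Set.Icc a b, (t : ℝ) ≤ a + γ → y t = g t) ∧
    (∀ t : Set.Icc a b, (t : ℝ) ≤ a + γ → Ψ y t = g t)

/-- A maximally extended solution of `y = Ψ y` on `[a, a+ζ)`. -/
def IsMaxExtSolution (a b ζ : ℝ) (Ψ : C(Set.Icc a b, E) → C(Set.Icc a b, E))
    (g : ℝ → E) : Prop :=
  0 < ζ ∧ ζ ≤ b - a ∧ (∀ γ ∈ Set.Ioo (0:ℝ) ζ, IsLocalSolution a b γ Ψ g) ∧
  Tendsto (fun γ => sSup ((fun t => ‖g t‖) '' Set.Icc a (a + γ))) (𝓝[<] ζ) atTop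

set_option linter.unusedSectionVars false

lemma partNorm_bddAbove (a b ξ : ℝ) (y : C(Set.Icc a b, E)) :
    BddAbove ((fun t : Set.Icc a b => ‖y t‖) '' {t : Set.Icc a b | (t : ℝ) ≤ a + ξ}) := by
  have hc : IsCompact (Set.range fun t : Set.Icc a b => ‖y t‖) := by
    simpa [Set.image_univ] using isCompact_univ.image (y.continuous.norm)
  exact hc.bddAbove.mono (by rintro x ⟨t, -, rfl⟩; exact ⟨t, rfl⟩)

lemma norm_le_partNorm {a b ξ : ℝ} (y : C(Set.Icc a b, E)) (t : Set.Icc a b)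
    (ht : (t : ℝ) ≤ a + ξ) : ‖y t‖ ≤ partNorm a b ξ y :=
  le_csSup (partNorm_bddAbove a b ξ y) ⟨t, ht, rfl⟩

lemma partNorm_le {a b ξ : ℝ} (hab : a ≤ b) (hξ : 0 ≤ ξ) (y : C(Set.Icc a b, E)) {C : ℝ}
    (hC : ∀ t : Set.Icc a b, (t : ℝ) ≤ a + ξ → ‖y t‖ ≤ C) : partNorm a b ξ y ≤ C := by
  apply csSup_le
  · exact ⟨‖y ⟨a, le_refl a, hab⟩‖, ⟨a, le_refl a, hab⟩, by simp; linarith, rfl⟩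
  · rintro x ⟨t, ht, rfl⟩; exact hC t ht

lemma partNorm_nonneg {a b ξ : ℝ} (hab : a ≤ b) (hξ : 0 ≤ ξ) (y : C(Set.Icc a b, E)) :
    0 ≤ partNorm a b ξ y :=
  (norm_nonneg _).trans (norm_le_partNorm y ⟨a, le_refl a, hab⟩ (by simp; linarith))

lemma partNorm_mono {a b ξ ξ' : ℝ} (hab : a ≤ b) (hξ : 0 ≤ ξ) (hξξ' : ξ ≤ ξ')
    (y : C(Set.Icc a b, E)) : partNorm a b ξ y ≤ partNorm a b ξ' y :=
  partNorm_le hab hξ y fun t ht => norm_le_partNorm y t (ht.trans (by linarith))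

lemma partNorm_congr {a b ξ : ℝ} (hab : a ≤ b) (hξ : 0 ≤ ξ) {y₁ y₂ : C(Set.Icc a b, E)}
    (h : ∀ t : Set.Icc a b, (t : ℝ) ≤ a + ξ → y₁ t = y₂ t) :
    partNorm a b ξ y₁ = partNorm a b ξ y₂ :=
  le_antisymm
    (partNorm_le hab hξ _ fun t ht => (h t ht) ▸ norm_le_partNorm y₂ t ht)
    (partNorm_le hab hξ _ fun t ht => (h t ht) ▸ norm_le_partNorm y₁ t ht)

lemma aux_contr {x p q : ℝ} (hq : q < 1) (hx : x ≤ q * p) (hpx : p ≤ x) (hp : 0 ≤ p) :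
    x ≤ 0 := by
  rcases le_or_gt q 0 with h | h
  · exact hx.trans (mul_nonpos_of_nonpos_of_nonneg h hp)
  · nlinarith

/-- Uniqueness of local solutions for a locally contracting Volterra operator. -/
theorem local_solution_unique
    (a b q : ℝ) (hab : a < b) (hq : q < 1)
    (Ψ : C(Set.Icc a b, E) → C(Set.Icc a b, E))
    (hVol : IsVolterra a b Ψ) (hLC : IsLocallyContracting a b q Ψ)
    (γ₁ γ₂ : ℝ) (g₁ g₂ : ℝ → E) (hγ : γ₁ ≤ γ₂)
    (h₁ : IsLocalSolution a b γ₁ Ψ g₁) (h₂ : IsLocalSolution a b γ₂ Ψ g₂) :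
    ∀ t ∈ Set.Icc a (a + γ₁), g₁ t = g₂ t := by
  obtain ⟨hγ₁0, hγ₁b, -, y₁, hy₁, hΨ₁⟩ := h₁
  obtain ⟨hγ₂0, hγ₂b, -, y₂, hy₂, hΨ₂⟩ := h₂
  have hab' : a ≤ b := hab.le
  -- truncation map
  have hmem : ∀ t : Set.Icc a b, min (t : ℝ) (a + γ₁) ∈ Set.Icc a b := fun t =>
    ⟨le_min t.2.1 (by linarith), min_le_of_left_le t.2.2⟩
  set T : C(Set.Icc a b, Set.Icc a b) :=
    ⟨fun t => ⟨min (t : ℝ) (a + γ₁), hmem t⟩,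
      Continuous.subtype_mk (continuous_subtype_val.min continuous_const) _⟩ with hTdef
  have hT_le : ∀ t : Set.Icc a b, ((T t : Set.Icc a b) : ℝ) ≤ a + γ₁ := fun t =>
    min_le_right _ _
  have hT_id : ∀ t : Set.Icc a b, (t : ℝ) ≤ a + γ₁ → T t = t := fun t ht =>
    Subtype.ext (min_eq_left ht)
  set Y₁ : C(Set.Icc a b, E) := y₁.comp T with hY₁def
  set Y₂ : C(Set.Icc a b, E) := y₂.comp T with hY₂def
  have hY₁app : ∀ t, Y₁ t = y₁ (T t) := fun t => rfl
  have hY₂app : ∀ t, Y₂ t = y₂ (T t) := fun t => rfl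
  have hY₁g : ∀ t : Set.Icc a b, (t : ℝ) ≤ a + γ₁ → Y₁ t = g₁ t := fun t ht => by
    rw [hY₁app, hT_id t ht]; exact hy₁ t ht
  have hY₂g : ∀ t : Set.Icc a b, (t : ℝ) ≤ a + γ₁ → Y₂ t = g₂ t := fun t ht => by
    rw [hY₂app, hT_id t ht]; exact hy₂ t (ht.trans (by linarith))
  -- Ψ applied to truncations still solves on [a, a+γ₁]
  have hΨY₁ : ∀ t : Set.Icc a b, (t : ℝ) ≤ a + γ₁ → Ψ Y₁ t = g₁ t := by
    rcases lt_or_eq_of_le hγ₁b with hlt | heq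
    · intro t ht
      have hagree : eqUpTo a b γ₁ y₁ Y₁ := fun s hs => by
        rw [hY₁app, hT_id s hs]
      have := hVol γ₁ ⟨hγ₁0, hlt⟩ y₁ Y₁ hagree t ht
      rw [← this]; exact hΨ₁ t ht
    · have hYeq : Y₁ = y₁ := by
        ext t
        rw [hY₁app, hT_id t (by have := t.2.2; linarith)]
      intro t ht; rw [hYeq]; exact hΨ₁ t ht
  have hΨY₂ : ∀ t : Set.Icc a b, (t : ℝ) ≤ a + γ₁ → Ψ Y₂ t = g₂ t := by
    rcases lt_or_eq_of_le hγ₁b with hlt | heq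
    · intro t ht
      have hagree : eqUpTo a b γ₁ y₂ Y₂ := fun s hs => by
        rw [hY₂app, hT_id s hs]
      have := hVol γ₁ ⟨hγ₁0, hlt⟩ y₂ Y₂ hagree t ht
      rw [← this]; exact hΨ₂ t (ht.trans (by linarith))
    · have hγeq : γ₂ = γ₁ := le_antisymm (by linarith) hγ
      have hYeq : Y₂ = y₂ := by
        ext t
        rw [hY₂app, hT_id t (by have := t.2.2; linarith)]
      intro t ht; rw [hYeq]; exact hΨ₂ t (ht.trans (by linarith))
  -- difference agrees with Ψ-difference up to γ₁
  have hdiffpt : ∀ t : Set.Icc a b, (t : ℝ) ≤ a + γ₁ →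
      (Y₁ - Y₂) t = (Ψ Y₁ - Ψ Y₂) t := fun t ht => by
    simp only [ContinuousMap.sub_apply]
    rw [hY₁g t ht, hY₂g t ht, hΨY₁ t ht, hΨY₂ t ht]
  -- truncation property of sup-norm of difference
  have hTT : ∀ t : Set.Icc a b, T (T t) = T t := fun t => hT_id _ (hT_le t)
  have htrunc : ∀ ξ : ℝ, 0 ≤ ξ →
      partNorm a b ξ (Y₁ - Y₂) ≤ partNorm a b γ₁ (Y₁ - Y₂) := by
    intro ξ hξ
    apply partNorm_le hab' hξ
    intro t ht
    have hval : (Y₁ - Y₂) t = (Y₁ - Y₂) (T t) := by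
      simp only [ContinuousMap.sub_apply, hY₁app, hY₂app, hTT]
    rw [hval]
    exact norm_le_partNorm _ (T t) (hT_le t)
  -- get δ from local contraction
  set M₁ := partNorm a b (b - a) Y₁ with hM₁
  set M₂ := partNorm a b (b - a) Y₂ with hM₂
  have hM₁0 : 0 ≤ M₁ := partNorm_nonneg hab' (by linarith) _
  set r : ℝ := max M₁ M₂ + 1 with hr
  have hr0 : 0 < r := by
    have : M₁ ≤ max M₁ M₂ := le_max_left _ _
    linarith
  obtain ⟨δ, hδ0, hδ⟩ := hLC r hr0
  obtain ⟨hq1, hq2⟩ := hδ Y₁ Y₂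
    (by have := le_max_left M₁ M₂; rw [hr]; linarith)
    (by have := le_max_right M₁ M₂; rw [hr]; linarith)
  -- key step
  have key : ∀ ρ : ℝ, 0 < ρ →
      partNorm a b ρ (Ψ Y₁ - Ψ Y₂) ≤ q * partNorm a b ρ (Y₁ - Y₂) →
      eqUpTo a b (min ρ γ₁) Y₁ Y₂ := by
    intro ρ hρ0 hΨle
    set ξ := min ρ γ₁ with hξdef
    have hξ0 : 0 < ξ := lt_min hρ0 hγ₁0
    have hξρ : ξ ≤ ρ := min_le_left _ _
    have hξγ : ξ ≤ γ₁ := min_le_right _ _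
    have hx : partNorm a b ξ (Y₁ - Y₂) = partNorm a b ξ (Ψ Y₁ - Ψ Y₂) :=
      partNorm_congr hab' hξ0.le fun t ht => hdiffpt t (ht.trans (by linarith))
    have h1 : partNorm a b ξ (Y₁ - Y₂) ≤ q * partNorm a b ρ (Y₁ - Y₂) := by
      rw [hx]
      exact (partNorm_mono hab' hξ0.le hξρ _).trans hΨle
    have h2 : partNorm a b ρ (Y₁ - Y₂) ≤ partNorm a b ξ (Y₁ - Y₂) := by
      rcases le_total ρ γ₁ with hle | hge
      · rw [hξdef, min_eq_left hle]
      · rw [hξdef, min_eq_right hge]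
        exact htrunc ρ hρ0.le
    have hzero : partNorm a b ξ (Y₁ - Y₂) ≤ 0 :=
      aux_contr hq h1 h2 (partNorm_nonneg hab' hρ0.le _)
    intro t ht
    have := norm_le_partNorm (Y₁ - Y₂) t ht
    have hn : ‖(Y₁ - Y₂) t‖ ≤ 0 := this.trans hzero
    have : (Y₁ - Y₂) t = 0 := by
      have := norm_nonneg ((Y₁ - Y₂) t)
      exact norm_eq_zero.mp (le_antisymm hn this)
    simpa [ContinuousMap.sub_apply, sub_eq_zero] using this
  -- main statement : agreement up to γ₁
  have main : eqUpTo a b γ₁ Y₁ Y₂ := by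
    rcases le_or_gt γ₁ δ with hcase | hcase
    · have := key δ hδ0 hq1
      rwa [min_eq_right hcase] at this
    · -- δ < γ₁
      have step : ∀ γ : ℝ, 0 < γ → γ < γ₁ → eqUpTo a b γ Y₁ Y₂ →
          eqUpTo a b (min (γ + δ) γ₁) Y₁ Y₂ := by
        intro γ hγ0 hγlt heq
        rcases le_total γ (b - a - δ) with hle | hgt
        · exact key (γ + δ) (by linarith) (hq2 γ ⟨hγ0, hle⟩ heq)
        · have hγ'0 : 0 < b - a - δ := by linarith
          have heq' : eqUpTo a b (b - a - δ) Y₁ Y₂ := fun t ht =>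
            heq t (by linarith)
          have hfull := key (b - a) (by linarith)
            (by simpa [show b - a - δ + δ = b - a by ring]
              using hq2 (b - a - δ) ⟨hγ'0, le_refl _⟩ heq')
          rw [min_eq_right hγ₁b] at hfull
          intro t ht
          exact hfull t (ht.trans (by
            have : min (γ + δ) γ₁ ≤ γ₁ := min_le_right _ _
            linarith))
      have ind : ∀ n : ℕ, eqUpTo a b (min ((n + 1) * δ) γ₁) Y₁ Y₂ := by
        intro n
        induction n with
        | zero => simpa using key δ hδ0 hq1
        | succ n ih =>
          rcases le_or_gt γ₁ ((n + 1) * δ) with hge | hlt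
          · rw [min_eq_right hge] at ih
            intro t ht
            exact ih t (ht.trans (add_le_add_right (min_le_right _ _) a))
          · have hpos : 0 < ((n : ℝ) + 1) * δ := by positivity
            have ih' : eqUpTo a b ((n + 1) * δ) Y₁ Y₂ := by
              rwa [min_eq_left hlt.le] at ih
            have := step ((n + 1) * δ) hpos hlt ih'
            have harith : (n : ℝ) + 1 + 1 = (n + 1) + 1 := by ring
            rw [show ((n : ℝ) + 1) * δ + δ = ((n : ℝ) + 1 + 1) * δ by ring] at this
            convert this using 3
            push_cast
            ring
      obtain ⟨n, hn⟩ := exists_nat_ge (γ₁ / δ)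
      have hle : γ₁ ≤ (n + 1) * δ := by
        have := (div_le_iff₀ hδ0).mp hn
        nlinarith
      have := ind n
      rwa [min_eq_right hle] at this
  -- conclude
  intro t ht
  have htb : t ∈ Set.Icc a b := ⟨ht.1, ht.2.trans (by linarith)⟩
  have ht' : ((⟨t, htb⟩ : Set.Icc a b) : ℝ) ≤ a + γ₁ := ht.2
  have := main ⟨t, htb⟩ ht'
  rw [hY₁g ⟨t, htb⟩ ht', hY₂g ⟨t, htb⟩ ht'] at this
  exact this
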